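/- Every triangle-free simple graph H on k vertices has at most e²·(k/(2e))^k Hamiltonian cycles. -/

import Mathlib

open SimpleGraph

section AuxCounting

open Finset

variable {V : Type} [Fintype V] [DecidableEq V]



/-- Finset of admissible continuation lists: length `m`, starting adjacent to `x`,
entries drawn (without repetition) from `s`, consecutive entries adjacent. -/
def exts (H : SimpleGraph V) [DecidableRel H.Adj] : ℕ → V → Finset V → Finset (List V)
  | 0, _, _ => {[]}
  | (m+1), x, s => (s.filter (fun y => H.Adj x y)).biUnion
      (fun y => ((exts H m y (s.erase y)).image (fun q => y :: q)))

lemma mem_exts (H : SimpleGraph V) [DecidableRel H.Adj] :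
    ∀ (q : List V) (m : ℕ) (x : V) (s : Finset V), q.length = m →
      List.Chain H.Adj x q → q.Nodup → (∀ a ∈ q, a ∈ s) → q ∈ exts H m x s := by
  intro q
  induction q with
  | nil => intro m x s hl _ _ _; subst hl; simp [exts]
  | cons y q ih =>
      intro m x s hl hc hnd hs
      subst hl
      simp only [List.length_cons, exts, Finset.mem_biUnion, Finset.mem_filter, Finset.mem_image]
      refine ⟨y, ⟨hs y (by simp), (List.chain_cons.mp hc).1⟩, q, ?_, rfl⟩
      refine ih _ y _ rfl (List.chain_cons.mp hc).2 hnd.of_cons (fun a ha => ?_)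
      exact Finset.mem_erase.mpr ⟨fun h => (List.nodup_cons.mp hnd).1 (h ▸ ha), hs a (by simp [ha])⟩

/-- The recursive bound function. -/
noncomputable def gb : ℕ → ℕ → ℝ
  | 0, _ => 1
  | 1, u => u
  | (m+2), u => (u:ℝ)^2/4 * gb m (u-2)

lemma gb_nonneg : ∀ m u, 0 ≤ gb m u
  | 0, u => by simp [gb]
  | 1, u => by simp [gb]
  | (m+2), u => by
      have := gb_nonneg m (u-2)
      simp only [gb]; positivity

lemma exts_card_le (H : SimpleGraph V) [DecidableRel H.Adj] (htf : H.CliqueFree 3) :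
    ∀ (m : ℕ) (x : V) (s : Finset V), ((exts H m x s).card : ℝ) ≤ gb m s.card := by
  intro m
  induction m using Nat.strong_induction_on with
  | _ m ih =>
    match m with
    | 0 => intro x s; simp [exts, gb]
    | 1 =>
      intro x s
      have h1 : exts H 1 x s = (s.filter (fun y => H.Adj x y)).biUnion
          (fun y => {[y]}) := by
        ext l; simp [exts]
      rw [h1]
      calc ((Finset.biUnion _ _).card : ℝ) ≤ (∑ y ∈ s.filter (fun y => H.Adj x y), ({[y]} : Finset (List V)).card : ℕ) := by
            exact_mod_cast Finset.card_biUnion_le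
        _ ≤ (s.card : ℝ) := by
            simp only [Finset.card_singleton, Finset.sum_const, smul_eq_mul, mul_one]
            exact_mod_cast Finset.card_filter_le s _
        _ = gb 1 s.card := by simp [gb]
    | (m+2) =>
      intro x s
      set A := s.filter (fun y => H.Adj x y) with hA
      -- two-step expansion
      have key : ∀ y ∈ A, ((exts H (m+1) y (s.erase y)).card : ℝ) ≤
          (((s.erase y).filter (fun z => H.Adj y z)).card : ℝ) * gb m (s.card - 2) := by
        intro y hy
        have hys : y ∈ s := (Finset.mem_filter.mp hy).1
        calc ((exts H (m+1) y (s.erase y)).card : ℝ)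
            ≤ ∑ z ∈ (s.erase y).filter (fun z => H.Adj y z),
                ((exts H m z ((s.erase y).erase z)).card : ℝ) := by
              simp only [exts]
              push_cast
              refine le_trans (Nat.cast_le.mpr Finset.card_biUnion_le) ?_
              push_cast
              exact Finset.sum_le_sum (fun z hz => Nat.cast_le.mpr (Finset.card_image_le))
          _ ≤ ∑ z ∈ (s.erase y).filter (fun z => H.Adj y z), gb m (s.card - 2) := by
              refine Finset.sum_le_sum (fun z hz => ?_)
              have hz' : z ∈ s.erase y := (Finset.mem_filter.mp hz).1
              have : ((s.erase y).erase z).card = s.card - 2 := by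
                rw [Finset.card_erase_of_mem hz', Finset.card_erase_of_mem hys]; omega
              rw [← this]
              exact ih m (by omega) z _
          _ = _ := by rw [Finset.sum_const, nsmul_eq_mul]
      -- triangle-free: the second-step choice sets avoid A
      have hAsub : ∀ y ∈ A, ((s.erase y).filter (fun z => H.Adj y z)).card ≤ s.card - A.card := by
        intro y hy
        have hxy : H.Adj x y := (Finset.mem_filter.mp hy).2
        have hsub : (s.erase y).filter (fun z => H.Adj y z) ⊆ s \ A := by
          intro z hz
          obtain ⟨hz1, hz2⟩ := Finset.mem_filter.mp hz
          refine Finset.mem_sdiff.mpr ⟨Finset.mem_of_mem_erase hz1, fun hzA => ?_⟩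
          have hxz : H.Adj x z := (Finset.mem_filter.mp hzA).2
          exact htf {x, y, z} (is3Clique_triple_iff.mpr ⟨hxy, hxz, hz2⟩)
        calc _ ≤ (s \ A).card := Finset.card_le_card hsub
          _ = s.card - A.card := Finset.card_sdiff_of_subset (Finset.filter_subset _ _)
      calc ((exts H (m+2) x s).card : ℝ)
          ≤ ∑ y ∈ A, ((exts H (m+1) y (s.erase y)).card : ℝ) := by
            simp only [exts]
            push_cast
            refine le_trans (Nat.cast_le.mpr Finset.card_biUnion_le) ?_
            push_cast
            exact Finset.sum_le_sum (fun y hy => Nat.cast_le.mpr Finset.card_image_le)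
        _ ≤ ∑ y ∈ A, (((s.erase y).filter (fun z => H.Adj y z)).card : ℝ) * gb m (s.card - 2) :=
            Finset.sum_le_sum key
        _ ≤ ∑ y ∈ A, ((s.card - A.card : ℕ) : ℝ) * gb m (s.card - 2) := by
            refine Finset.sum_le_sum (fun y hy => ?_)
            exact mul_le_mul_of_nonneg_right (Nat.cast_le.mpr (hAsub y hy)) (gb_nonneg _ _)
        _ = (A.card : ℝ) * ((s.card - A.card : ℕ) : ℝ) * gb m (s.card - 2) := by
            rw [Finset.sum_const, nsmul_eq_mul]; ring
        _ ≤ (s.card : ℝ)^2/4 * gb m (s.card - 2) := by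
            refine mul_le_mul_of_nonneg_right ?_ (gb_nonneg _ _)
            have hAle : A.card ≤ s.card := Finset.card_filter_le s _
            have h1 : ((s.card - A.card : ℕ) : ℝ) = (s.card : ℝ) - A.card :=
              Nat.cast_sub hAle
            rw [h1]
            nlinarith [sq_nonneg ((s.card : ℝ) - 2 * A.card)]
        _ = gb (m+2) s.card := by simp [gb]


end AuxCounting

section AuxStirling

open Real

-- Stirling bounds
lemma stirling_upper (n : ℕ) (hn : 1 ≤ n) :
    (n.factorial : ℝ) ≤ Real.exp 1 * Real.sqrt n * ((n : ℝ) / Real.exp 1) ^ n := by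
  have h1 : Stirling.stirlingSeq n ≤ Stirling.stirlingSeq 1 := by
    obtain ⟨m, rfl⟩ := Nat.exists_eq_add_of_le hn
    simpa [Function.comp, Nat.succ_eq_add_one, Nat.add_comm] using
      Stirling.stirlingSeq'_antitone (Nat.zero_le m)
  rw [Stirling.stirlingSeq_one] at h1
  have h2 : (0:ℝ) < Real.sqrt (2 * n) * ((n : ℝ) / Real.exp 1) ^ n := by
    have : (0:ℝ) < (n:ℝ) := by exact_mod_cast hn
    positivity
  have h3 : (n.factorial : ℝ) = Stirling.stirlingSeq n * (Real.sqrt (2 * n) * ((n : ℝ) / Real.exp 1) ^ n) := by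
    rw [Stirling.stirlingSeq]; field_simp
  rw [h3]
  calc Stirling.stirlingSeq n * (Real.sqrt (2 * n) * ((n : ℝ) / Real.exp 1) ^ n)
      ≤ (Real.exp 1 / Real.sqrt 2) * (Real.sqrt (2 * n) * ((n : ℝ) / Real.exp 1) ^ n) :=
        mul_le_mul_of_nonneg_right h1 h2.le
    _ = Real.exp 1 * Real.sqrt n * ((n : ℝ) / Real.exp 1) ^ n := by
        rw [show (2 * (n:ℝ)) = 2 * n by ring, Real.sqrt_mul (by norm_num : (0:ℝ) ≤ 2)]
        rw [div_mul_eq_mul_div, eq_comm]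
        field_simp
lemma stirling_lower (n : ℕ) (hn : 1 ≤ n) :
    Real.sqrt (2 * Real.pi * n) * ((n : ℝ) / Real.exp 1) ^ n ≤ (n.factorial : ℝ) := by
  have h1 : Real.sqrt Real.pi ≤ Stirling.stirlingSeq n := by
    obtain ⟨m, rfl⟩ := Nat.exists_eq_add_of_le hn
    have := Stirling.stirlingSeq'_antitone.le_of_tendsto
      (Stirling.tendsto_stirlingSeq_sqrt_pi.comp (Filter.tendsto_add_atTop_nat 1)) m
    simpa [Function.comp, Nat.succ_eq_add_one, Nat.add_comm] using this
  have h3 : (n.factorial : ℝ) = Stirling.stirlingSeq n * (Real.sqrt (2 * n) * ((n : ℝ) / Real.exp 1) ^ n) := by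
    rw [Stirling.stirlingSeq]; field_simp
  have h2 : (0:ℝ) ≤ Real.sqrt (2 * n) * ((n : ℝ) / Real.exp 1) ^ n := by positivity
  rw [h3]
  calc Real.sqrt (2 * Real.pi * n) * ((n : ℝ) / Real.exp 1) ^ n
      = Real.sqrt Real.pi * (Real.sqrt (2 * n) * ((n : ℝ) / Real.exp 1) ^ n) := by
        rw [show 2 * Real.pi * (n:ℝ) = Real.pi * (2 * n) by ring,
          Real.sqrt_mul Real.pi_pos.le]
        ring
    _ ≤ _ := mul_le_mul_of_nonneg_right h1 h2



lemma sq_stirling_upper (n : ℕ) (hn : 1 ≤ n) :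
    ((n.factorial : ℝ))^2 ≤ Real.exp 1 ^ 2 * n * ((n:ℝ) / Real.exp 1) ^ (2*n) := by
  have h := stirling_upper n hn
  have h2 : ((n.factorial:ℝ))^2 ≤ (Real.exp 1 * Real.sqrt n * ((n:ℝ)/Real.exp 1)^n)^2 :=
    pow_le_pow_left₀ (by positivity) h 2
  calc ((n.factorial:ℝ))^2 ≤ _ := h2
    _ = Real.exp 1 ^ 2 * (Real.sqrt n)^2 * (((n:ℝ)/Real.exp 1)^n)^2 := by ring
    _ = Real.exp 1 ^ 2 * n * ((n:ℝ) / Real.exp 1) ^ (2*n) := by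
        rw [Real.sq_sqrt (by positivity), show 2*n = n*2 by ring, pow_mul]

lemma sq_stirling_lower (n : ℕ) (hn : 1 ≤ n) :
    2 * Real.pi * n * ((n:ℝ) / Real.exp 1) ^ (2*n) ≤ ((n.factorial : ℝ))^2 := by
  have h := stirling_lower n hn
  have h2 : (Real.sqrt (2*Real.pi*n) * ((n:ℝ)/Real.exp 1)^n)^2 ≤ ((n.factorial:ℝ))^2 :=
    pow_le_pow_left₀ (by positivity) h 2
  calc 2 * Real.pi * n * ((n:ℝ) / Real.exp 1) ^ (2*n)
      = (Real.sqrt (2*Real.pi*n))^2 * (((n:ℝ)/Real.exp 1)^n)^2 := by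
        rw [Real.sq_sqrt (by positivity), show 2*n = n*2 by ring, pow_mul]
    _ = (Real.sqrt (2*Real.pi*n) * ((n:ℝ)/Real.exp 1)^n)^2 := by ring
    _ ≤ _ := h2

lemma key_odd (n : ℕ) (hn : 1 ≤ n) :
    Real.exp 1 * ((n:ℝ) - 1)^n ≤ ((n:ℝ))^n := by
  have hnp : (0:ℝ) < n := by exact_mod_cast hn
  have h3 : (1 - 1/(n:ℝ)) ≤ Real.exp (-(1/(n:ℝ))) := by
    have := Real.add_one_le_exp (-(1/(n:ℝ))); linarith
  have h4 : (0:ℝ) ≤ 1 - 1/(n:ℝ) := by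
    have : 1/(n:ℝ) ≤ 1 := by
      rw [div_le_one hnp]; exact_mod_cast hn
    linarith
  have h5 : (1 - 1/(n:ℝ))^n ≤ Real.exp (-(1/(n:ℝ)))^n := pow_le_pow_left₀ h4 h3 n
  have h6 : Real.exp (-(1/(n:ℝ)))^n = Real.exp (-1) := by
    rw [← Real.exp_nat_mul]; congr 1; field_simp
  rw [h6] at h5
  have h7 : ((n:ℝ) - 1)^n = (1 - 1/(n:ℝ))^n * (n:ℝ)^n := by
    rw [← mul_pow]; congr 1; field_simp
  have h8 : Real.exp 1 * (Real.exp (-1) * (n:ℝ)^n) = (n:ℝ)^n := by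
    rw [← mul_assoc, ← Real.exp_add]; simp
  calc Real.exp 1 * ((n:ℝ) - 1)^n
      = Real.exp 1 * ((1 - 1/(n:ℝ))^n * (n:ℝ)^n) := by rw [h7]
    _ ≤ Real.exp 1 * (Real.exp (-1) * (n:ℝ)^n) := by
        have : (1 - 1/(n:ℝ))^n * (n:ℝ)^n ≤ Real.exp (-1) * (n:ℝ)^n :=
          mul_le_mul_of_nonneg_right h5 (by positivity)
        exact mul_le_mul_of_nonneg_left this (Real.exp_pos 1).le
    _ = (n:ℝ)^n := h8

lemma odd_case (t : ℕ) :
    ((t.factorial : ℝ))^2 / 2 ≤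
      Real.exp 1 ^ 2 * (((2*t+1 : ℕ) : ℝ) / (2 * Real.exp 1)) ^ (2*t+1) := by
  have he : (0:ℝ) < Real.exp 1 := Real.exp_pos 1
  have h2e : (2:ℝ) ≤ Real.exp 1 := by have := Real.add_one_le_exp (1:ℝ); linarith
  have hko0 := fun (n : ℕ) (hn : 1 ≤ n) => key_odd n hn
  have hst := fun (n : ℕ) (hn : 1 ≤ n) => sq_stirling_upper n hn
  set E := Real.exp 1 with hE
  clear_value E
  rcases Nat.eq_zero_or_pos t with rfl | ht
  · have hr : E ^ 2 * (((2*0+1 : ℕ) : ℝ) / (2 * E)) ^ (2*0+1)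
        = E / 2 := by
      have hE0 : E ≠ 0 := he.ne'
      field_simp; ring_nf; exact mul_inv_cancel₀ hE0
    rw [hr]
    norm_num
    linarith
  · have htp : (0:ℝ) < t := by exact_mod_cast ht
    have h1 := hst t ht
    set n := 2*t+1 with hn
    have hcast : ((n:ℕ):ℝ) = 2*(t:ℝ)+1 := by push_cast [hn]; ring
    have key : E * (2*(t:ℝ))^n ≤ 2 * (2*(t:ℝ)+1)^n := by
      have hko := hko0 n (by omega)
      rw [hcast] at hko
      have hc2 : (2*(t:ℝ)+1) - 1 = 2*(t:ℝ) := by ring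
      rw [hc2] at hko
      nlinarith [pow_nonneg (by positivity : (0:ℝ) ≤ 2*(t:ℝ)+1) n]
    rw [hcast, div_pow, mul_div_assoc']
    rw [div_le_div_iff₀ (by norm_num) (by positivity)]
    have expand : E ^2 * (t:ℝ) * (((t:ℝ)/E)^(2*t)) * (2*E)^n
        = E^2 * (E * (2*(t:ℝ))^n) := by
      rw [div_pow, mul_pow, mul_pow, hn, pow_succ, pow_succ]
      have : E ^ (2*t) ≠ 0 := by positivity
      field_simp
      ring
    calc ((t.factorial:ℝ))^2 * (2*E)^n
        ≤ (E ^2 * (t:ℝ) * (((t:ℝ)/E)^(2*t))) * (2*E)^n := by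
          exact mul_le_mul_of_nonneg_right h1 (by positivity)
      _ = E^2 * (E * (2*(t:ℝ))^n) := expand
      _ ≤ E^2 * (2 * (2*(t:ℝ)+1)^n) :=
          mul_le_mul_of_nonneg_left key (by positivity)
      _ = E^2 * (2*(t:ℝ)+1)^n * 2 := by ring

lemma poly_key (t : ℕ) (ht : 1 ≤ t) :
    ((2*(t:ℝ)+1))^(4*t+3) ≤ 4 * Real.pi * t * ((t:ℝ)+1)^2 * (4*(t:ℝ)^2+4*t)^(2*t) := by
  have htp : (1:ℝ) ≤ (t:ℝ) := by exact_mod_cast ht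
  have hu : (0:ℝ) < 4*(t:ℝ)^2+4*t := by nlinarith
  -- step a
  have ha : (4*(t:ℝ)^2+4*t+1)^(2*t) ≤ (4*(t:ℝ)^2+4*t)^(2*t) * Real.exp (1/(2*(t:ℝ)+2)) := by
    have h1 : 4*(t:ℝ)^2+4*t+1 ≤ (4*(t:ℝ)^2+4*t) * Real.exp (1/(4*(t:ℝ)^2+4*t)) := by
      have h2 := Real.add_one_le_exp (1/(4*(t:ℝ)^2+4*t))
      have h3 : (4*(t:ℝ)^2+4*t) * (1/(4*(t:ℝ)^2+4*t) + 1) ≤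
          (4*(t:ℝ)^2+4*t) * Real.exp (1/(4*(t:ℝ)^2+4*t)) :=
        mul_le_mul_of_nonneg_left h2 hu.le
      have h4 : (4*(t:ℝ)^2+4*t) * (1/(4*(t:ℝ)^2+4*t) + 1) = 4*(t:ℝ)^2+4*t+1 := by
        field_simp; ring
      linarith
    have h5 : ((4*(t:ℝ)^2+4*t+1))^(2*t) ≤ ((4*(t:ℝ)^2+4*t) * Real.exp (1/(4*(t:ℝ)^2+4*t)))^(2*t) :=
      pow_le_pow_left₀ (by positivity) h1 (2*t)
    have h6 : ((4*(t:ℝ)^2+4*t) * Real.exp (1/(4*(t:ℝ)^2+4*t)))^(2*t)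
        = (4*(t:ℝ)^2+4*t)^(2*t) * Real.exp (1/(2*(t:ℝ)+2)) := by
      rw [mul_pow, ← Real.exp_nat_mul]
      congr 2
      push_cast
      field_simp
      ring
    rw [h6] at h5; exact h5
  -- step b
  have hb : Real.exp (1/(2*(t:ℝ)+2)) ≤ 4/3 := by
    have hx : (1/(2*(t:ℝ)+2)) ≤ 1/4 := by
      rw [div_le_div_iff₀ (by positivity) (by norm_num)]
      linarith
    have h2 := Real.add_one_le_exp (-(1/(2*(t:ℝ)+2)))
    have hpos : (0:ℝ) < 1 - 1/(2*(t:ℝ)+2) := by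
      have : 1/(2*(t:ℝ)+2) ≤ 1/4 := hx
      linarith
    have h3 : Real.exp (1/(2*(t:ℝ)+2)) ≤ 1/(1 - 1/(2*(t:ℝ)+2)) := by
      rw [le_div_iff₀ hpos]
      have h4 : Real.exp (1/(2*(t:ℝ)+2)) * Real.exp (-(1/(2*(t:ℝ)+2))) = 1 := by
        rw [← Real.exp_add]; simp
      nlinarith [Real.exp_pos (1/(2*(t:ℝ)+2))]
    have h5 : 1/(1 - 1/(2*(t:ℝ)+2)) ≤ 4/3 := by
      rw [div_le_div_iff₀ hpos (by norm_num)]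
      linarith
    linarith
  -- step c
  have hc : ((2*(t:ℝ)+1))^3 * (4/3) ≤ 4 * Real.pi * t * ((t:ℝ)+1)^2 := by
    have hpi : (3.14:ℝ) ≤ Real.pi := Real.pi_gt_d2.le
    have h1 : 4 * (3.14:ℝ) * t * ((t:ℝ)+1)^2 ≤ 4 * Real.pi * t * ((t:ℝ)+1)^2 := by
      have : (0:ℝ) ≤ 4 * (t:ℝ) * ((t:ℝ)+1)^2 := by positivity
      nlinarith
    have h2 : ((2*(t:ℝ)+1))^3 * (4/3) ≤ 4 * (3.14:ℝ) * t * ((t:ℝ)+1)^2 := by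
      nlinarith [htp, mul_le_mul_of_nonneg_left htp (by nlinarith : (0:ℝ) ≤ (t:ℝ)^2),
        mul_le_mul_of_nonneg_left htp (by positivity : (0:ℝ) ≤ (t:ℝ))]
    linarith
  -- combine
  have hsplit : ((2*(t:ℝ)+1))^(4*t+3) = ((2*(t:ℝ)+1))^3 * (4*(t:ℝ)^2+4*t+1)^(2*t) := by
    rw [show 4*t+3 = 3 + 2*(2*t) by ring, pow_add]
    congr 1
    rw [show ((2*(t:ℝ)+1))^(2*(2*t)) = (((2*(t:ℝ)+1))^2)^(2*t) by rw [← pow_mul]]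
    congr 1
    ring
  rw [hsplit]
  calc ((2*(t:ℝ)+1))^3 * (4*(t:ℝ)^2+4*t+1)^(2*t)
      ≤ ((2*(t:ℝ)+1))^3 * ((4*(t:ℝ)^2+4*t)^(2*t) * Real.exp (1/(2*(t:ℝ)+2))) :=
        mul_le_mul_of_nonneg_left ha (by positivity)
    _ ≤ ((2*(t:ℝ)+1))^3 * ((4*(t:ℝ)^2+4*t)^(2*t) * (4/3)) := by
        refine mul_le_mul_of_nonneg_left ?_ (by positivity)
        exact mul_le_mul_of_nonneg_left hb (by positivity)
    _ = (((2*(t:ℝ)+1))^3 * (4/3)) * (4*(t:ℝ)^2+4*t)^(2*t) := by ring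
    _ ≤ (4 * Real.pi * t * ((t:ℝ)+1)^2) * (4*(t:ℝ)^2+4*t)^(2*t) :=
        mul_le_mul_of_nonneg_right hc (by positivity)

lemma even_case (t : ℕ) :
    (((2*t+1).factorial : ℝ))^2 / (16^t * ((t.factorial : ℝ))^2) / 2 ≤
      Real.exp 1 ^ 2 * (((2*t+2 : ℕ) : ℝ) / (2 * Real.exp 1)) ^ (2*t+2) := by
  have he : (0:ℝ) < Real.exp 1 := Real.exp_pos 1
  have hA0 := fun (n : ℕ) (hn : 1 ≤ n) => sq_stirling_upper n hn
  have hB0 := fun (n : ℕ) (hn : 1 ≤ n) => sq_stirling_lower n hn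
  have hpi : (0:ℝ) < Real.pi := Real.pi_pos
  have hpoly := poly_key t
  set E := Real.exp 1 with hE
  clear_value E
  rcases Nat.eq_zero_or_pos t with rfl | ht
  · norm_num
    have hq : E ^ 2 * ((2:ℝ) / (2 * E)) ^ 2 = 1 := by
      rw [div_pow]; field_simp
    rw [hq]; norm_num
  · have htp : (0:ℝ) < t := by exact_mod_cast ht
    have hA := hA0 (2*t+1) (by omega)
    have hB := hB0 t ht
    have hcast : (((2*t+1:ℕ)):ℝ) = 2*(t:ℝ)+1 := by push_cast; ring
    have hcast2 : (((2*t+2:ℕ)):ℝ) = 2*(t:ℝ)+2 := by push_cast; ring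
    rw [hcast] at hA
    rw [hcast2, div_div, div_le_iff₀ (by positivity)]
    have hpoly' := hpoly ht
    have hRnn : (0:ℝ) ≤ E^2 * ((2*(t:ℝ)+2)/(2*E))^(2*t+2) := by positivity
    have step1 : E^2 * ((2*(t:ℝ)+2)/(2*E))^(2*t+2) * (16^t * (2*Real.pi*(t:ℝ)*((t:ℝ)/E)^(2*t)) * 2)
        ≤ E^2 * ((2*(t:ℝ)+2)/(2*E))^(2*t+2) * (16^t * ((t.factorial:ℝ))^2 * 2) := by
      refine mul_le_mul_of_nonneg_left ?_ hRnn
      have h16 : (0:ℝ) ≤ (16:ℝ)^t := by positivity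
      nlinarith [hB, h16]
    refine le_trans ?_ step1
    have hEp : (0:ℝ) < E^(4*t) := by positivity
    refine le_of_mul_le_mul_right ?_ hEp
    have eqL : (E^2*(2*(t:ℝ)+1)*(((2*(t:ℝ)+1)/E)^(2*(2*t+1)))) * E^(4*t)
        = (2*(t:ℝ)+1)^(4*t+3) := by
      rw [div_pow]
      rw [show 2*(2*t+1) = 4*t+2 by ring]
      have hEne : E ≠ 0 := ne_of_gt he
      field_simp
      ring
    have eqR : E^2 * ((2*(t:ℝ)+2)/(2*E))^(2*t+2) * (16^t * (2*Real.pi*(t:ℝ)*((t:ℝ)/E)^(2*t)) * 2) * E^(4*t)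
        = 4*Real.pi*(t:ℝ)*((t:ℝ)+1)^2*(4*(t:ℝ)^2+4*(t:ℝ))^(2*t) := by
      rw [show (2*(t:ℝ)+2) = 2*((t:ℝ)+1) by ring,
        show (4*(t:ℝ)^2+4*(t:ℝ)) = 4*((t:ℝ)*((t:ℝ)+1)) by ring]
      rw [div_pow, div_pow, mul_pow (2:ℝ) ((t:ℝ)+1), mul_pow (2:ℝ) E,
        mul_pow (4:ℝ) ((t:ℝ)*((t:ℝ)+1)), mul_pow ((t:ℝ)) ((t:ℝ)+1),
        show ((4:ℝ))^(2*t) = ((4:ℝ)^2)^t by rw [pow_mul], show ((4:ℝ)^2 : ℝ) = 16 by norm_num]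
      have hEne : E ≠ 0 := ne_of_gt he
      field_simp
      ring
    calc (((2*t+1).factorial:ℝ))^2 * E^(4*t)
        ≤ (E^2*(2*(t:ℝ)+1)*(((2*(t:ℝ)+1)/E)^(2*(2*t+1)))) * E^(4*t) :=
          mul_le_mul_of_nonneg_right hA hEp.le
      _ = (2*(t:ℝ)+1)^(4*t+3) := eqL
      _ ≤ 4*Real.pi*(t:ℝ)*((t:ℝ)+1)^2*(4*(t:ℝ)^2+4*(t:ℝ))^(2*t) := hpoly'
      _ = E^2 * ((2*(t:ℝ)+2)/(2*E))^(2*t+2) * (16^t * (2*Real.pi*(t:ℝ)*((t:ℝ)/E)^(2*t)) * 2) * E^(4*t) := eqR.symm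


lemma gb_diag_even : ∀ t : ℕ, gb (2*t) (2*t) = ((t.factorial : ℝ))^2 := by
  intro t
  induction t with
  | zero => simp [gb]
  | succ t ih =>
      have h1 : 2*(t+1) = (2*t)+2 := by ring
      rw [h1]
      show gb ((2*t)+2) ((2*t)+2) = _
      rw [gb]
      have h2 : (2*t)+2-2 = 2*t := by omega
      rw [h2, ih, Nat.factorial_succ]
      push_cast
      ring

lemma gb_diag_odd : ∀ t : ℕ,
    gb (2*t+1) (2*t+1) = (((2*t+1).factorial : ℝ))^2 / (16^t * ((t.factorial : ℝ))^2) := by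
  intro t
  induction t with
  | zero => simp [gb]
  | succ t ih =>
      have h1 : 2*(t+1)+1 = (2*t+1)+2 := by ring
      rw [h1]
      show gb ((2*t+1)+2) ((2*t+1)+2) = _
      rw [gb]
      have h2 : (2*t+1)+2-2 = 2*t+1 := by omega
      rw [h2, ih]
      have h3 : (2*t+1)+2 = 2*t+3 := by omega
      rw [h3]
      have hf1 : ((2*t+3).factorial : ℝ) = (2*(t:ℝ)+3) * (2*(t:ℝ)+2) * ((2*t+1).factorial : ℝ) := by
        have : 2*t+3 = (2*t+2)+1 := by omega
        rw [this, Nat.factorial_succ, show 2*t+2 = (2*t+1)+1 by omega, Nat.factorial_succ]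
        push_cast
        ring
      have hf2 : (((t+1).factorial : ℝ)) = ((t:ℝ)+1) * (t.factorial : ℝ) := by
        rw [Nat.factorial_succ]; push_cast; ring
      rw [hf1, hf2]
      have hfe : (0:ℝ) < (t.factorial : ℝ) := by exact_mod_cast t.factorial_pos
      have h16 : (0:ℝ) < (16:ℝ)^t := by positivity
      have ht1 : (0:ℝ) < (t:ℝ)+1 := by positivity
      field_simp
      push_cast
      ring


end AuxStirling

section AuxWalk

lemma edges_eq_zip {V : Type} {G : SimpleGraph V} : ∀ {a b : V} (w : G.Walk a b),
    w.edges = w.support.zipWith (fun x y => s(x,y)) w.support.tail := by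
  intro a b w
  induction w with
  | nil => rfl
  | cons h p ih =>
      rw [Walk.edges_cons, Walk.support_cons, ih, p.support_eq_cons]
      rfl

lemma toSubgraph_eq_of_support_eq {V : Type} {G : SimpleGraph V} {r : V}
    (w w' : G.Walk r r) (h : w.support = w'.support) : w.toSubgraph = w'.toSubgraph := by
  have he : w.edges = w'.edges := by rw [edges_eq_zip, edges_eq_zip, h]
  apply SimpleGraph.Subgraph.ext
  · rw [Walk.verts_toSubgraph, Walk.verts_toSubgraph, h]
  · funext a b
    apply propext
    constructor <;> intro had
    · exact Subgraph.mem_edgeSet.mp ((w'.mem_edges_toSubgraph).mpr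
        (he ▸ (w.mem_edges_toSubgraph.mp (Subgraph.mem_edgeSet.mpr had))))
    · exact Subgraph.mem_edgeSet.mp ((w.mem_edges_toSubgraph).mpr
        (he ▸ (w'.mem_edges_toSubgraph.mp (Subgraph.mem_edgeSet.mpr had))))

lemma ham_rotate {V : Type} [DecidableEq V] {G : SimpleGraph V} {v u : V} {w : G.Walk v v}
    (hw : w.IsHamiltonianCycle) (h : u ∈ w.support) : (w.rotate u h).IsHamiltonianCycle := by
  rw [Walk.isHamiltonianCycle_iff_isCycle_and_support_count_tail_eq_one] at hw ⊢
  exact ⟨hw.1.rotate h, fun a => by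
    rw [List.Perm.count_eq (Walk.support_rotate w u h).perm]; exact hw.2 a⟩

lemma ham_reverse {V : Type} [DecidableEq V] {G : SimpleGraph V} {r : V} {w : G.Walk r r}
    (hw : w.IsHamiltonianCycle) : w.reverse.IsHamiltonianCycle := by
  have hcount : ∀ a, w.reverse.support.tail.count a = 1 := by
    intro a
    have h1 : w.reverse.support.count a = w.support.count a := by
      rw [Walk.support_reverse]; exact List.count_reverse ..
    have h2 : w.reverse.support = r :: w.reverse.support.tail := Walk.support_eq_cons _
    rcases eq_or_ne a r with rfl | hne
    · have h3 := hw.count_support_self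
      rw [h2, List.count_cons_self] at h1
      omega
    · have h3 := hw.support_count_of_ne hne.symm
      rw [h2, List.count_cons_of_ne hne.symm] at h1
      omega
  rw [Walk.isHamiltonianCycle_iff_isCycle_and_support_count_tail_eq_one]
  refine ⟨⟨⟨Walk.IsTrail.reverse _ hw.isCycle.isTrail, ?_⟩, ?_⟩, hcount⟩
  · intro hn
    apply hw.isCycle.ne_nil
    have := congrArg Walk.reverse hn
    rwa [Walk.reverse_reverse, Walk.reverse_nil] at this
  · rw [List.nodup_iff_count_le_one]
    intro a
    rw [hcount a]

lemma rev_ne_self {α : Type} {l : List α} (h : l.Nodup) (h2 : 2 ≤ l.length) :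
    l.reverse ≠ l := by
  match l, h2 with
  | a :: b :: tl, _ =>
    intro heq
    have h1 : (a :: b :: tl).head? = (a :: b :: tl).getLast? := by
      conv_lhs => rw [← heq]
      exact (a :: b :: tl).head?_reverse
    rw [List.head?_cons, List.getLast?_eq_getLast (by simp),
      List.getLast_cons (by simp)] at h1
    have h3 : a ∈ b :: tl := (Option.some_injective _ h1) ▸ List.getLast_mem (by simp)
    exact (List.nodup_cons.mp h).1 h3



end AuxWalk

/-- The number of Hamiltonian cycles in a simple graph `H`, counted as distinct
cycle subgraphs passing through all the vertices. -/
noncomputable def hamCycleCount {V : Type*} [DecidableEq V] (H : SimpleGraph V) : ℕ :=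
  Nat.card {H' : H.Subgraph //
    ∃ (u : V) (w : H.Walk u u), w.IsHamiltonianCycle ∧ w.toSubgraph = H'}

theorem stmt_10 (k : ℕ) {V : Type} [Fintype V] [DecidableEq V] (H : SimpleGraph V)
    (hcard : Fintype.card V = k) (htf : H.CliqueFree 3) :
    (hamCycleCount H : ℝ) ≤ Real.exp 1 ^ 2 * ((k : ℝ) / (2 * Real.exp 1)) ^ k := by
  classical
  letI : DecidableRel H.Adj := Classical.decRel _
  have hRnn : (0:ℝ) ≤ Real.exp 1 ^ 2 * ((k : ℝ) / (2 * Real.exp 1)) ^ k := by positivity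
  unfold hamCycleCount
  by_cases hne : Nonempty {H' : H.Subgraph //
      ∃ (u : V) (w : H.Walk u u), w.IsHamiltonianCycle ∧ w.toSubgraph = H'}
  case neg =>
    haveI := not_nonempty_iff.mp hne
    rw [Nat.card_of_isEmpty]
    exact_mod_cast hRnn
  case pos =>
    obtain ⟨⟨H'0, u0, w0, hw0, hsub0⟩⟩ := hne
    have hk : 3 ≤ k := by
      have h1 := hw0.length_eq
      rw [hcard] at h1
      have h2 := hw0.isCycle.three_le_length
      omega
    have hchoose : ∀ p : {H' : H.Subgraph //
        ∃ (u : V) (w : H.Walk u u), w.IsHamiltonianCycle ∧ w.toSubgraph = H'},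
        ∃ w : H.Walk u0 u0, w.IsHamiltonianCycle ∧ w.toSubgraph = p.1 := by
      rintro ⟨H', u, w, hw, hsub⟩
      exact ⟨w.rotate u0 (hw.mem_support u0), ham_rotate hw _,
        by rw [Walk.toSubgraph_rotate]; exact hsub⟩
    choose wf hwf hsf using hchoose
    set T := exts H (k-1) u0 (Finset.univ.erase u0) with hT
    have hstruct : ∀ (w' : H.Walk u0 u0), w'.IsHamiltonianCycle →
        w'.support.tail.dropLast ∈ T ∧
        w'.support = u0 :: (w'.support.tail.dropLast ++ [u0]) := by
      intro w' hw'
      have hlen : w'.support.length = k + 1 := by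
        rw [Walk.length_support, hw'.length_eq, hcard]
      have hlt : w'.support.tail.length = k := by
        rw [List.length_tail, hlen]
        omega
      have hnn : w'.support.tail ≠ [] := by
        intro hcon; rw [hcon] at hlt; simp at hlt; omega
      have hlast : w'.support.tail.getLast hnn = u0 := by
        rw [List.getLast_tail]; exact w'.getLast_support
      have hsplit : w'.support.tail.dropLast ++ [u0] = w'.support.tail := by
        conv_rhs => rw [← List.dropLast_append_getLast hnn]
        rw [hlast]
      have hnd : w'.support.tail.Nodup := hw'.isCycle.support_nodup
      have hndq : (w'.support.tail.dropLast).Nodup := hnd.sublist (List.dropLast_sublist _)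
      have hsupp : w'.support = u0 :: (w'.support.tail.dropLast ++ [u0]) := by
        rw [hsplit]; exact w'.support_eq_cons
      refine ⟨?_, hsupp⟩
      apply mem_exts
      · rw [List.length_dropLast, hlt]
      · have hch : List.Chain' H.Adj w'.support := w'.isChain_adj_support
        rw [hsupp] at hch
        have hpre : (u0 :: w'.support.tail.dropLast) <+:
            (u0 :: (w'.support.tail.dropLast ++ [u0])) := by
          refine ⟨[u0], by simp⟩
        exact List.IsChain.prefix hch hpre
      · exact hndq
      · intro a ha
        refine Finset.mem_erase.mpr ⟨?_, Finset.mem_univ a⟩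
        intro haa
        have hndt : (w'.support.tail.dropLast ++ [u0]).Nodup := by rw [hsplit]; exact hnd
        exact (List.disjoint_of_nodup_append hndt) ha (by simp [haa])
    -- the two-orientation encoding
    let Sub := {H' : H.Subgraph //
        ∃ (u : V) (w : H.Walk u u), w.IsHamiltonianCycle ∧ w.toSubgraph = H'}
    let Wb : Sub × Bool → H.Walk u0 u0 := fun pb => if pb.2 then wf pb.1 else (wf pb.1).reverse
    have hWb_ham : ∀ pb, (Wb pb).IsHamiltonianCycle := by
      rintro ⟨p, b⟩
      cases b
      · exact ham_reverse (hwf p)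
      · exact hwf p
    have hWb_sub : ∀ pb, (Wb pb).toSubgraph = pb.1.1 := by
      rintro ⟨p, b⟩
      cases b
      · show ((wf p).reverse).toSubgraph = _
        rw [Walk.toSubgraph_reverse]; exact hsf p
      · exact hsf p
    let F : Sub × Bool → {l : List V // l ∈ T} :=
      fun pb => ⟨(Wb pb).support.tail.dropLast, (hstruct _ (hWb_ham pb)).1⟩
    have hFsupp : ∀ pb, (Wb pb).support = u0 :: ((Wb pb).support.tail.dropLast ++ [u0]) :=
      fun pb => (hstruct _ (hWb_ham pb)).2
    -- q-facts
    have hqlen : ∀ pb, 2 ≤ (Wb pb).support.tail.dropLast.length := by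
      intro pb
      have h1 : (Wb pb).support.tail.dropLast.length = k - 1 := by
        rw [List.length_dropLast, List.length_tail, Walk.length_support,
          (hWb_ham pb).length_eq, hcard]
        omega
      omega
    have hqnd : ∀ pb, (Wb pb).support.tail.dropLast.Nodup := by
      intro pb
      exact ((hWb_ham pb).isCycle.support_nodup).sublist (List.dropLast_sublist _)
    have hinj : Function.Injective F := by
      intro pb1 pb2 heq
      have hql : (Wb pb1).support.tail.dropLast = (Wb pb2).support.tail.dropLast :=
        congrArg Subtype.val heq
      have hsupp_eq : (Wb pb1).support = (Wb pb2).support := by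
        rw [hFsupp pb1, hql]
        exact (hFsupp pb2).symm
      have hsub_eq : pb1.1 = pb2.1 := Subtype.ext (by
        rw [← hWb_sub pb1, ← hWb_sub pb2]
        exact toSubgraph_eq_of_support_eq _ _ hsupp_eq)
      obtain ⟨p1, b1⟩ := pb1
      obtain ⟨p2, b2⟩ := pb2
      simp only at hsub_eq
      subst hsub_eq
      have hrev : ∀ (b : Bool), (Wb (p1, !b)).support.tail.dropLast
          = ((Wb (p1, b)).support.tail.dropLast).reverse := by
        intro b
        have e1 := hFsupp (p1, b)
        have e2 := hFsupp (p1, !b)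
        have e3 : (Wb (p1, !b)).support = (Wb (p1, b)).support.reverse := by
          cases b
          · show (wf p1).support = ((wf p1).reverse).support.reverse
            rw [Walk.support_reverse, List.reverse_reverse]
          · show ((wf p1).reverse).support = (wf p1).support.reverse
            exact Walk.support_reverse _
        rw [e1, e2] at e3
        have e4 : (u0 :: ((Wb (p1, b)).support.tail.dropLast ++ [u0])).reverse
            = u0 :: (((Wb (p1, b)).support.tail.dropLast).reverse ++ [u0]) := by simp
        rw [e4] at e3
        have e5 : (Wb (p1, !b)).support.tail.dropLast ++ [u0]
            = ((Wb (p1, b)).support.tail.dropLast).reverse ++ [u0] := by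
          injection e3
        exact List.append_cancel_right e5
      rcases eq_or_ne b1 b2 with hbb | hbb
      · rw [hbb]
      -- now show b1 = b2
      exfalso
      have hb' : b2 = !b1 := by
        cases b1 <;> cases b2 <;> first | rfl | (exact absurd rfl hbb)
      rw [hb'] at hql
      rw [hrev b1] at hql
      exact rev_ne_self (hqnd (p1, b1)) (hqlen (p1, b1)) hql.symm
    -- counting
    have hcount : Nat.card (Sub × Bool) ≤ T.card := by
      have h1 := Nat.card_le_card_of_injective F hinj
      rwa [Nat.card_eq_finsetCard] at h1
    rw [Nat.card_prod, Nat.card_eq_fintype_card (α := Bool), Fintype.card_bool] at hcount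
    have hTb : (T.card : ℝ) ≤ gb (k-1) (k-1) := by
      have h1 := exts_card_le H htf (k-1) u0 (Finset.univ.erase u0)
      rwa [Finset.card_erase_of_mem (Finset.mem_univ u0), Finset.card_univ, hcard] at h1
    have hfin : ((Nat.card Sub : ℕ) : ℝ) ≤ gb (k-1) (k-1) / 2 := by
      rw [le_div_iff₀ (by norm_num : (0:ℝ) < 2)]
      calc ((Nat.card Sub : ℕ) : ℝ) * 2 = ((Nat.card Sub * 2 : ℕ) : ℝ) := by push_cast; ring
        _ ≤ (T.card : ℝ) := by exact_mod_cast hcount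
        _ ≤ gb (k-1) (k-1) := hTb
    refine le_trans hfin ?_
    rcases Nat.even_or_odd k with hpar | hpar
    · obtain ⟨t, rfl⟩ : ∃ t, k = 2*t+2 := by
        rw [Nat.even_iff] at hpar
        exact ⟨(k-2)/2, by omega⟩
      have hg : gb (2*t+2-1) (2*t+2-1) = (((2*t+1).factorial : ℝ))^2 / (16^t * ((t.factorial : ℝ))^2) := by
        rw [show 2*t+2-1 = 2*t+1 by omega]
        exact gb_diag_odd t
      rw [hg]
      exact even_case t
    · obtain ⟨t, rfl⟩ : ∃ t, k = 2*t+1 := by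
        rw [Nat.odd_iff] at hpar
        exact ⟨(k-1)/2, by omega⟩
      have hg : gb (2*t+1-1) (2*t+1-1) = ((t.factorial : ℝ))^2 := by
        rw [show 2*t+1-1 = 2*t by omega]
        exact gb_diag_even t
      rw [hg]
      exact odd_case t
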